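/- Let n ≥ 1 and let a_1, …, a_n be positive integers with a_1 > 1. If n is odd, then the continuant N[𝓛_1, …, 𝓛_n] ∈ K lies in the polynomial subring ℚ[y_1, …, y_d] (i.e., it has no negative powers of the variables, despite each even-indexed 𝓛_i being a genuine Laurent expression). If n is even, then (∏_{j=1}^{ℓ_n − 1} y_j) · N[𝓛_1, …, 𝓛_n] lies in ℚ[y_1, …, y_d]. -/

import Mathlib

open MvPolynomial Finset

/-- The ambient field `K = ℚ(y_1, y_2, …)` (only `y_1,…,y_d` are used). -/
abbrev Kf : Type := FractionRing (MvPolynomial ℕ ℚ)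

/-- The variable `y_j`, viewed in the fraction field. -/
noncomputable def y (j : ℕ) : Kf := algebraMap (MvPolynomial ℕ ℚ) Kf (X j)

/-- Partial sums `ℓ_i = a_1 + ⋯ + a_i`, with `ℓ_0 = 0`. -/
def ell (a : ℕ → ℕ) (i : ℕ) : ℕ := ∑ s ∈ Finset.Icc 1 i, a s

/-- `φ_i`. -/
noncomputable def phi (a : ℕ → ℕ) (i : ℕ) : Kf :=
  if Odd i then
    ∑ k ∈ Finset.Icc (ell a (i-1)) (ell a i - 1), ∏ j ∈ Finset.Icc (ell a (i-1) + 1) k, y j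
  else
    ∑ k ∈ Finset.Icc (ell a (i-1) + 1) (ell a i), ∏ j ∈ Finset.Icc k (ell a i - 1), y j

/-- `C_i`. -/
noncomputable def Cc (a : ℕ → ℕ) (i : ℕ) : Kf :=
  if Odd i then ∏ j ∈ Finset.Icc 1 (ell a (i-1)), y j
  else ∏ j ∈ Finset.Icc 1 (ell a i - 1), (y j)⁻¹

/-- `𝓛_i = φ_i C_i`. -/
noncomputable def Lr (a : ℕ → ℕ) (i : ℕ) : Kf := phi a i * Cc a i

/-- The continuant `N[b_1,…,b_m]`. -/
def contN {R : Type*} [CommSemiring R] (b : ℕ → R) : ℕ → R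
  | 0 => 1
  | 1 => b 1
  | (m+2) => b (m+2) * contN b (m+1) + contN b m

/-- The F-polynomials `F_m = F(𝒢[a_1,…,a_m])`. -/
noncomputable def F (a : ℕ → ℕ) : ℕ → Kf
  | 0 => 1
  | 1 => phi a 1
  | 2 => phi a 1 * phi a 2 + ∏ j ∈ Finset.Icc 1 (ell a 2 - 1), y j
  | (m+3) =>
    if Odd (m+3) then
      y (ell a (m+2)) * phi a (m+3) * F a (m+2) + F a (m+1)
    else
      phi a (m+3) * F a (m+2) + (∏ j ∈ Finset.Icc (ell a (m+1)) (ell a (m+3) - 1), y j) * F a (m+1)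


-- ===== auxiliary lemmas =====

lemma y_mem (j : ℕ) : y j ∈ (algebraMap (MvPolynomial ℕ ℚ) Kf).range := ⟨X j, rfl⟩

lemma y_ne_zero (j : ℕ) : y j ≠ 0 := by
  have hinj := IsFractionRing.injective (MvPolynomial ℕ ℚ) Kf
  intro h
  exact MvPolynomial.X_ne_zero j (hinj (by simp only [y] at h; simp [h]))

lemma prod_y_ne_zero (s : Finset ℕ) : (∏ j ∈ s, y j) ≠ 0 :=
  Finset.prod_ne_zero_iff.mpr fun j _ => y_ne_zero j

lemma prod_y_mem (s : Finset ℕ) : (∏ j ∈ s, y j) ∈ (algebraMap (MvPolynomial ℕ ℚ) Kf).range :=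
  Subring.prod_mem _ fun j _ => y_mem j

lemma prodsplit1 (t : ℕ) (ht : 1 ≤ t) :
    (∏ j ∈ Icc 1 t, y j) = (∏ j ∈ Icc 1 (t-1), y j) * y t := by
  obtain ⟨s, rfl⟩ : ∃ s, t = s + 1 := ⟨t - 1, by omega⟩
  rw [Finset.prod_Icc_succ_top (by omega) y]
  simp

lemma prodsplit2 (p q : ℕ) (hp : 1 ≤ p) (hq : p - 1 ≤ q) :
    (∏ j ∈ Icc 1 q, y j) = (∏ j ∈ Icc 1 (p-1), y j) * (∏ j ∈ Icc p q, y j) := by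
  have h := Finset.prod_Ioc_consecutive y (Nat.zero_le (p-1)) hq
  rw [← Finset.Icc_add_one_left_eq_Ioc 0 q, ← Finset.Icc_add_one_left_eq_Ioc 0 (p-1), ← Finset.Icc_add_one_left_eq_Ioc (p-1) q] at h
  rw [show p-1+1 = p from by omega, show 0+1 = 1 from rfl] at h
  exact h.symm

lemma phi_mem (a : ℕ → ℕ) (i : ℕ) : phi a i ∈ (algebraMap (MvPolynomial ℕ ℚ) Kf).range := by
  unfold phi
  split
  · exact Subring.sum_mem _ fun k _ => prod_y_mem _
  · exact Subring.sum_mem _ fun k _ => prod_y_mem _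

lemma F_mem (a : ℕ → ℕ) (m : ℕ) : F a m ∈ (algebraMap (MvPolynomial ℕ ℚ) Kf).range := by
  induction m using Nat.strong_induction_on with
  | _ m ih =>
    match m, ih with
    | 0, _ => exact one_mem _
    | 1, _ => exact phi_mem a 1
    | 2, _ => exact add_mem (mul_mem (phi_mem a 1) (phi_mem a 2)) (prod_y_mem _)
    | (k+3), ih =>
      have h2 := ih (k+2) (by omega)
      have h1 := ih (k+1) (by omega)
      show F a (k+3) ∈ _
      rw [F]
      split
      · exact add_mem (mul_mem (mul_mem (y_mem _) (phi_mem a _)) h2) h1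
      · exact add_mem (mul_mem (phi_mem a _) h2) (mul_mem (prod_y_mem _) h1)

lemma ell_zero (a : ℕ → ℕ) : ell a 0 = 0 := by simp [ell]

lemma ell_one (a : ℕ → ℕ) : ell a 1 = a 1 := by simp [ell]

lemma ell_mono (a : ℕ → ℕ) : Monotone (ell a) := fun i j h =>
  Finset.sum_le_sum_of_subset (Finset.Icc_subset_Icc_right h)

lemma key (n : ℕ) (a : ℕ → ℕ)
    (hpos : ∀ i, 1 ≤ i → i ≤ n → 0 < a i) (ha1 : 1 < a 1) :
    ∀ m, 1 ≤ m → m ≤ n →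
      (Odd m → contN (Lr a) m = F a m) ∧
      (Even m → contN (Lr a) m = F a m * (∏ j ∈ Finset.Icc 1 (ell a m - 1), y j)⁻¹) := by
  have hell2 : ∀ m, 1 ≤ m → 2 ≤ ell a m := by
    intro m hm
    have := ell_mono a hm
    rw [ell_one] at this
    omega
  intro m
  induction m using Nat.strong_induction_on with
  | _ m ih =>
    match m, ih with
    | 0, _ => intro h _; exact absurd h (by omega)
    | 1, _ =>
      intro _ _
      refine ⟨fun _ => ?_, fun h => absurd h (by decide)⟩
      show Lr a 1 = F a 1
      simp [Lr, Cc, F, phi, ell_zero, Nat.odd_iff]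
    | 2, _ =>
      intro _ _
      refine ⟨fun h => absurd h (by decide), fun _ => ?_⟩
      have hC2 : Cc a 2 = (∏ j ∈ Finset.Icc 1 (ell a 2 - 1), y j)⁻¹ := by
        rw [Cc, if_neg (by decide), Finset.prod_inv_distrib]
      have hC1 : Cc a 1 = 1 := by
        rw [Cc, if_pos (by decide)]
        simp [ell_zero]
      have hne : (∏ j ∈ Finset.Icc 1 (ell a 2 - 1), y j) ≠ 0 := prod_y_ne_zero _
      show Lr a 2 * Lr a 1 + 1 = _
      rw [Lr, Lr, hC1, hC2, show F a 2 = phi a 1 * phi a 2 +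
        ∏ j ∈ Finset.Icc 1 (ell a 2 - 1), y j from rfl]
      field_simp
    | (k+3), ih =>
      intro _ hmn
      obtain ⟨ih2odd, ih2even⟩ := ih (k+2) (by omega) (by omega) (by omega)
      obtain ⟨ih1odd, ih1even⟩ := ih (k+1) (by omega) (by omega) (by omega)
      have hcont : contN (Lr a) (k+3)
          = Lr a (k+3) * contN (Lr a) (k+2) + contN (Lr a) (k+1) := rfl
      rcases Nat.even_or_odd k with hk | hk
      · -- k even, so k+3 odd
        have hodd3 : Odd (k+3) := by rcases hk with ⟨t, ht⟩; exact ⟨t+1, by omega⟩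
        refine ⟨fun _ => ?_, fun h => ?_⟩
        · have h2 := ih2even (by rcases hk with ⟨t, ht⟩; exact ⟨t+1, by omega⟩)
          have h1 := ih1odd (by rcases hk with ⟨t, ht⟩; exact ⟨t, by omega⟩)
          have hC3 : Cc a (k+3) = ∏ j ∈ Finset.Icc 1 (ell a (k+2)), y j := by
            rw [Cc, if_pos hodd3, show k+3-1 = k+2 from by omega]
          have hFeq : F a (k+3)
              = y (ell a (k+2)) * phi a (k+3) * F a (k+2) + F a (k+1) := by
            rw [F, if_pos hodd3]
          have hne : (∏ j ∈ Finset.Icc 1 (ell a (k+2) - 1), y j) ≠ 0 := prod_y_ne_zero _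
          rw [hcont, h2, h1, Lr, hC3, hFeq,
            prodsplit1 (ell a (k+2)) (by have := hell2 (k+2) (by omega); omega)]
          field_simp
        · rcases h with ⟨t, ht⟩; rcases hodd3 with ⟨s, hs⟩; omega
      · -- k odd, so k+3 even
        have heven3 : Even (k+3) := by rcases hk with ⟨t, ht⟩; exact ⟨t+2, by omega⟩
        refine ⟨fun h => ?_, fun _ => ?_⟩
        · rcases h with ⟨t, ht⟩; rcases heven3 with ⟨s, hs⟩; omega
        · have h2 := ih2odd (by rcases hk with ⟨t, ht⟩; exact ⟨t+1, by omega⟩)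
          have h1 := ih1even (by rcases hk with ⟨t, ht⟩; exact ⟨t+1, by omega⟩)
          have hnotodd : ¬ Odd (k+3) := by
            rcases heven3 with ⟨s, hs⟩; rintro ⟨t, ht⟩; omega
          have hC3 : Cc a (k+3) = (∏ j ∈ Finset.Icc 1 (ell a (k+3) - 1), y j)⁻¹ := by
            rw [Cc, if_neg hnotodd, Finset.prod_inv_distrib]
          have hFeq : F a (k+3) = phi a (k+3) * F a (k+2)
              + (∏ j ∈ Finset.Icc (ell a (k+1)) (ell a (k+3) - 1), y j) * F a (k+1) := by
            rw [F, if_neg hnotodd]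
          have hp1 : 1 ≤ ell a (k+1) := by have := hell2 (k+1) (by omega); omega
          have hq1 : ell a (k+1) - 1 ≤ ell a (k+3) - 1 := by
            have := ell_mono a (show k+1 ≤ k+3 from by omega); omega
          have hsplit := prodsplit2 (ell a (k+1)) (ell a (k+3) - 1) hp1 hq1
          have hne1 : (∏ j ∈ Finset.Icc 1 (ell a (k+1) - 1), y j) ≠ 0 := prod_y_ne_zero _
          have hne2 : (∏ j ∈ Finset.Icc (ell a (k+1)) (ell a (k+3) - 1), y j) ≠ 0 :=
            prod_y_ne_zero _
          rw [hcont, h2, h1, Lr, hC3, hFeq, hsplit]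
          field_simp

/-- Laurent phenomenon for the continuant of the `𝓛_i`: for odd `n` the continuant
`N[𝓛_1,…,𝓛_n]` is a polynomial in `y_1,…,y_d`; for even `n` it becomes one after
multiplying by `∏_{j=1}^{ℓ_n − 1} y_j`. -/
theorem continuant_is_polynomial
    (n : ℕ) (hn : 1 ≤ n) (a : ℕ → ℕ)
    (hpos : ∀ i, 1 ≤ i → i ≤ n → 0 < a i) (ha1 : 1 < a 1) :
    (Odd n → contN (Lr a) n ∈ (algebraMap (MvPolynomial ℕ ℚ) Kf).range) ∧
    (Even n → (∏ j ∈ Finset.Icc 1 (ell a n - 1), y j) * contN (Lr a) n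
      ∈ (algebraMap (MvPolynomial ℕ ℚ) Kf).range) := by
  obtain ⟨hodd, heven⟩ := key n a hpos ha1 n hn le_rfl
  refine ⟨fun h => ?_, fun h => ?_⟩
  · rw [hodd h]; exact F_mem a n
  · rw [heven h, mul_comm (F a n) _, ← mul_assoc,
      mul_inv_cancel₀ (prod_y_ne_zero _), one_mul]
    exact F_mem a n
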